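/- If P is an n×n irreducible stochastic matrix and Q is a generator matrix with P = e^Q, then Q is irreducible (i.e., the continuous-time Markov chain with generator Q has a single communicating class). -/

import Mathlib

open Matrix

/-- `P` is a stochastic matrix: nonnegative entries, rows sum to 1. -/
def IsStochastic {n : ℕ} (P : Matrix (Fin n) (Fin n) ℝ) : Prop :=
  (∀ i j, 0 ≤ P i j) ∧ ∀ i, ∑ j, P i j = 1

/-- `Q` is a generator matrix: nonnegative off-diagonal entries, rows sum to 0. -/
def IsGenerator {n : ℕ} (Q : Matrix (Fin n) (Fin n) ℝ) : Prop :=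
  (∀ i j, i ≠ j → 0 ≤ Q i j) ∧ ∀ i, ∑ j, Q i j = 0

/-- A stochastic matrix is irreducible if its directed graph (edge `i → j` when
`P i j > 0`) is strongly connected. -/
def IsIrreducibleStochastic {n : ℕ} (P : Matrix (Fin n) (Fin n) ℝ) : Prop :=
  ∀ i j : Fin n, Relation.ReflTransGen (fun a b => 0 < P a b) i j

/-- A generator matrix is irreducible if the directed graph with an edge `i → j`
whenever `i ≠ j` and `Q i j > 0` is strongly connected. -/
def IsIrreducibleGenerator {n : ℕ} (Q : Matrix (Fin n) (Fin n) ℝ) : Prop :=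
  ∀ i j : Fin n, Relation.ReflTransGen (fun a b => a ≠ b ∧ 0 < Q a b) i j

private lemma matrix_exp_hasSum {n : ℕ} (Q : Matrix (Fin n) (Fin n) ℝ) :
    HasSum (fun k : ℕ => ((k.factorial : ℝ))⁻¹ • Q ^ k) (NormedSpace.exp Q) := by
  letI : NormedRing (Matrix (Fin n) (Fin n) ℝ) := Matrix.linftyOpNormedRing
  letI : NormedAlgebra ℝ (Matrix (Fin n) (Fin n) ℝ) := Matrix.linftyOpNormedAlgebra
  exact NormedSpace.exp_series_hasSum_exp' Q

theorem embedding_of_irreducible_is_irreducible {n : ℕ}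
    (P Q : Matrix (Fin n) (Fin n) ℝ)
    (hP : IsStochastic P) (hPirr : IsIrreducibleStochastic P)
    (hQ : IsGenerator Q) (hPQ : NormedSpace.exp Q = P) :
    IsIrreducibleGenerator Q := by
  -- key step: a `P`-edge yields `Q`-reachability
  have key : ∀ i j : Fin n, 0 < P i j →
      Relation.ReflTransGen (fun a b => a ≠ b ∧ 0 < Q a b) i j := by
    intro i j hij
    by_contra hj
    -- S : reachable set from i
    set S : Set (Fin n) := {x | Relation.ReflTransGen (fun a b => a ≠ b ∧ 0 < Q a b) i x}
      with hS
    have hiS : i ∈ S := Relation.ReflTransGen.refl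
    have hjS : j ∉ S := hj
    -- the zero-pattern set C is a closed subalgebra containing Q
    set C : Set (Matrix (Fin n) (Fin n) ℝ) :=
      {M | ∀ a b, a ∈ S → b ∉ S → M a b = 0} with hC
    have hQC : Q ∈ C := by
      intro a b haS hbS
      by_contra hab
      have hne : a ≠ b := by rintro rfl; exact hbS haS
      have h0 : 0 < Q a b := lt_of_le_of_ne (hQ.1 a b hne) (Ne.symm hab)
      exact hbS (haS.tail ⟨hne, h0⟩)
    have h1C : (1 : Matrix (Fin n) (Fin n) ℝ) ∈ C := by
      intro a b haS hbS
      have hne : a ≠ b := by rintro rfl; exact hbS haS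
      simp [Matrix.one_apply_ne hne]
    have hmul : ∀ M N, M ∈ C → N ∈ C → M * N ∈ C := by
      intro M N hM hN a b haS hbS
      rw [Matrix.mul_apply]
      refine Finset.sum_eq_zero fun m _ => ?_
      by_cases hm : m ∈ S
      · rw [hN m b hm hbS, mul_zero]
      · rw [hM a m haS hm, zero_mul]
    have hpow : ∀ k : ℕ, Q ^ k ∈ C := by
      intro k
      induction k with
      | zero => simpa using h1C
      | succ k ih => rw [pow_succ]; exact hmul _ _ ih hQC
    have hsmul : ∀ (c : ℝ) (M), M ∈ C → c • M ∈ C := by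
      intro c M hM a b haS hbS
      simp [Matrix.smul_apply, hM a b haS hbS]
    have hCclosed : IsClosed C := by
      have : C = ⋂ (a : Fin n) (b : Fin n) (_ : a ∈ S) (_ : b ∉ S),
          {M : Matrix (Fin n) (Fin n) ℝ | M a b = 0} := by
        ext M; simp [hC, Set.mem_iInter]
      rw [this]
      refine isClosed_iInter fun a => isClosed_iInter fun b =>
        isClosed_iInter fun _ => isClosed_iInter fun _ => ?_
      exact isClosed_eq ((continuous_apply b).comp (continuous_apply a)) continuous_const
    -- exp Q ∈ C by taking limits of partial sums
    have hexp : NormedSpace.exp Q ∈ C := by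
      have hsum := matrix_exp_hasSum Q
      refine hCclosed.mem_of_tendsto hsum ?_
      filter_upwards with F
      -- partial sums are in C
      induction F using Finset.induction with
      | empty =>
        rw [Finset.sum_empty]
        intro a b _ _; rfl
      | @insert x F hx ih =>
        rw [Finset.sum_insert hx]
        intro a b haS hbS
        have h1 := hsmul ((x.factorial : ℝ))⁻¹ (Q ^ x) (hpow x) a b haS hbS
        have h2 := ih a b haS hbS
        simp [Matrix.add_apply, h1, h2]
    have : P i j = 0 := by rw [← hPQ]; exact hexp i j hiS hjS
    exact absurd this (ne_of_gt hij)
  -- lift over P-reachability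
  intro i j
  have h := hPirr i j
  induction h with
  | refl => exact Relation.ReflTransGen.refl
  | tail _ hstep ih => exact ih.trans (key _ _ hstep)
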